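/- Let a > 1 and d ≥ 1 be integers and R a degree-d polynomial with integer coefficients, positive leading coefficient b_d, mapping ℕ to ℕ. Let p be a prime coprime to a, N a positive integer with h_a(p) ≤ N (where h_a(p) is the order of a mod p). Then #{1 ≤ n ≤ N : a^{R(n)} ≡ 1 (mod p)} ≤ C(R) · N / h_a(p)^{1/d}, where C(R) > 0 depends only on R (assuming the polynomial root-counting bound ρ(f, m) ≤ c d b_d^{1/d} m^{1-1/d}). -/

import Mathlib

-- block counting lemma
theorem count_blocks (R : Polynomial ℤ) (h N : ℕ) (hh : 0 < h) :
    ((Finset.Icc 1 N).filter (fun n : ℕ => (h : ℤ) ∣ R.eval (n : ℤ))).card ≤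
    (N / h + 1) * ((Finset.Icc 1 h).filter (fun n : ℕ => (h : ℤ) ∣ R.eval (n : ℤ))).card := by
  classical
  have key : ((Finset.Icc 1 N).filter (fun n : ℕ => (h : ℤ) ∣ R.eval (n : ℤ))).card ≤
      ((Finset.range (N / h + 1)) ×ˢ
        ((Finset.Icc 1 h).filter (fun n : ℕ => (h : ℤ) ∣ R.eval (n : ℤ)))).card := by
    apply Finset.card_le_card_of_injOn (fun n => ((n - 1) / h, (n - 1) % h + 1))
    · intro n hn
      simp only [Finset.mem_coe, Finset.mem_filter, Finset.mem_Icc] at hn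
      obtain ⟨⟨h1, h2⟩, hdvd⟩ := hn
      simp only [Finset.mem_coe, Finset.mem_product, Finset.mem_range, Finset.mem_filter, Finset.mem_Icc]
      refine ⟨by
        have : (n - 1) / h ≤ N / h := Nat.div_le_div_right (by omega)
        omega, ⟨by omega, by have := Nat.mod_lt (n - 1) hh; omega⟩, ?_⟩
      -- h ∣ R.eval r where r = (n-1)%h+1, from n ≡ r mod h
      have hmod : (h : ℤ) ∣ (n : ℤ) - ((n - 1) % h + 1 : ℕ) := by
        have e1 : n = h * ((n - 1) / h) + (n - 1) % h + 1 := by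
          have := Nat.div_add_mod (n - 1) h; omega
        have e1' : (n : ℤ) = (h : ℤ) * ((n - 1) / h : ℕ) + ((n - 1) % h : ℕ) + 1 := by
          exact_mod_cast congrArg (Nat.cast : ℕ → ℤ) e1
        exact ⟨((n - 1) / h : ℕ), by push_cast; push_cast at e1'; omega⟩
      have := Polynomial.sub_dvd_eval_sub (n : ℤ) (((n - 1) % h + 1 : ℕ) : ℤ) R
      have hdvd2 : (h : ℤ) ∣ R.eval (n : ℤ) - R.eval (((n - 1) % h + 1 : ℕ) : ℤ) :=
        dvd_trans hmod this
      have := dvd_sub hdvd hdvd2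
      simpa using this
    · intro m hm n hn heq
      simp only [Finset.mem_coe, Finset.mem_filter, Finset.mem_Icc] at hm hn
      simp only [Prod.mk.injEq] at heq
      obtain ⟨e1, e2⟩ := heq
      have e2' : (m - 1) % h = (n - 1) % h := by omega
      have h1 := Nat.div_add_mod (m - 1) h
      have h2 := Nat.div_add_mod (n - 1) h
      rw [e1, e2'] at h1
      omega
  rw [Finset.card_product, Finset.card_range] at key
  exact key

theorem stmt_14 (d : ℕ) (hd : 1 ≤ d) (R : Polynomial ℤ)
    (hdeg : R.natDegree = d) (hlead : 0 < R.leadingCoeff)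
    (hpos : ∀ n : ℕ, 0 < n → 0 < R.eval (n : ℤ)) (c : ℝ) (hc : 0 < c)
    (hK : ∀ m : ℕ, 0 < m →
      (((Finset.Icc 1 m).filter (fun n : ℕ => (m : ℤ) ∣ R.eval (n : ℤ))).card : ℝ)
        ≤ c * d * (R.leadingCoeff : ℝ) ^ ((1 : ℝ) / d) * (m : ℝ) ^ (1 - 1 / (d : ℝ))) :
    ∃ C : ℝ, 0 < C ∧ ∀ a : ℕ, 1 < a → ∀ p : ℕ, p.Prime → Nat.Coprime p a →
      ∀ N : ℕ, 0 < N → orderOf (a : ZMod p) ≤ N →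
      (((Finset.Icc 1 N).filter
          (fun n : ℕ => a ^ (R.eval (n : ℤ)).toNat ≡ 1 [MOD p])).card : ℝ)
        ≤ C * N / (orderOf (a : ZMod p) : ℝ) ^ ((1 : ℝ) / d) := by
  set b : ℝ := (R.leadingCoeff : ℝ) with hb
  have hbpos : (0 : ℝ) < b := by rw [hb]; exact_mod_cast hlead
  have hB : (0 : ℝ) < b ^ ((1 : ℝ) / d) := Real.rpow_pos_of_pos hbpos _
  refine ⟨2 * c * d * b ^ ((1 : ℝ) / d), by positivity, ?_⟩
  intro a ha p hp hcop N hN hhN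
  haveI : Fact p.Prime := ⟨hp⟩
  set h := orderOf (a : ZMod p) with hhdef
  have hane : (a : ZMod p) ≠ 0 := by
    rw [Ne, ZMod.natCast_eq_zero_iff]
    exact (hp.coprime_iff_not_dvd.mp hcop)
  have hh : 0 < h := by
    rw [hhdef, orderOf_pos_iff, isOfFinOrder_iff_pow_eq_one]
    exact ⟨p - 1, by have := hp.one_lt; omega, ZMod.pow_card_sub_one_eq_one hane⟩
  have hset : (Finset.Icc 1 N).filter
      (fun n : ℕ => a ^ (R.eval (n : ℤ)).toNat ≡ 1 [MOD p]) =
      (Finset.Icc 1 N).filter (fun n : ℕ => (h : ℤ) ∣ R.eval (n : ℤ)) := by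
    apply Finset.filter_congr
    intro n hn
    simp only [Finset.mem_Icc] at hn
    have hR : 0 < R.eval (n : ℤ) := hpos n (by omega)
    have hk : ((R.eval (n : ℤ)).toNat : ℤ) = R.eval (n : ℤ) := Int.toNat_of_nonneg hR.le
    constructor
    · intro hcond
      have : ((a ^ (R.eval (n : ℤ)).toNat : ℕ) : ZMod p) = ((1 : ℕ) : ZMod p) :=
        (ZMod.natCast_eq_natCast_iff _ _ _).mpr hcond
      push_cast at this
      have hdvd : h ∣ (R.eval (n : ℤ)).toNat := orderOf_dvd_of_pow_eq_one this
      have := Int.natCast_dvd_natCast.mpr hdvd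
      rwa [hk] at this
    · intro hcond
      have hdvd : h ∣ (R.eval (n : ℤ)).toNat := by
        have : (h : ℤ) ∣ ((R.eval (n : ℤ)).toNat : ℤ) := by rwa [hk]
        exact_mod_cast this
      have hpow : (a : ZMod p) ^ (R.eval (n : ℤ)).toNat = 1 :=
        orderOf_dvd_iff_pow_eq_one.mp hdvd
      have : ((a ^ (R.eval (n : ℤ)).toNat : ℕ) : ZMod p) = ((1 : ℕ) : ZMod p) := by
        push_cast; exact hpow
      exact (ZMod.natCast_eq_natCast_iff _ _ _).mp this
  rw [hset]
  have hcount := count_blocks R h N hh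
  have hrho := hK h hh
  have hhR : (0 : ℝ) < (h : ℝ) := by exact_mod_cast hh
  have hhRne : (h : ℝ) ≠ 0 := hhR.ne'
  have hpowne : (h : ℝ) ^ ((1 : ℝ) / d) ≠ 0 := (Real.rpow_pos_of_pos hhR _).ne'
  have step1 : (((Finset.Icc 1 N).filter (fun n : ℕ => (h : ℤ) ∣ R.eval (n : ℤ))).card : ℝ)
      ≤ (((N / h : ℕ) : ℝ) + 1) *
        (((Finset.Icc 1 h).filter (fun n : ℕ => (h : ℤ) ∣ R.eval (n : ℤ))).card : ℝ) := by
    exact_mod_cast hcount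
  have step2 : (((N / h : ℕ) : ℝ) + 1) *
      (((Finset.Icc 1 h).filter (fun n : ℕ => (h : ℤ) ∣ R.eval (n : ℤ))).card : ℝ)
      ≤ (2 * (N : ℝ) / (h : ℝ)) * (c * d * b ^ ((1 : ℝ) / d) * (h : ℝ) ^ (1 - 1 / (d : ℝ))) := by
    apply mul_le_mul
    · have h1 : ((N / h : ℕ) : ℝ) ≤ (N : ℝ) / (h : ℝ) := Nat.cast_div_le
      have h2 : (1 : ℝ) ≤ (N : ℝ) / (h : ℝ) := by
        rw [le_div_iff₀ hhR]; exact_mod_cast by simpa using hhN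
      calc ((N / h : ℕ) : ℝ) + 1 ≤ (N : ℝ) / (h : ℝ) + (N : ℝ) / (h : ℝ) := by linarith
        _ = 2 * (N : ℝ) / (h : ℝ) := by ring
    · exact hrho
    · positivity
    · positivity
  have heq : (2 * (N : ℝ) / (h : ℝ)) * (c * d * b ^ ((1 : ℝ) / d) * (h : ℝ) ^ (1 - 1 / (d : ℝ)))
      = 2 * c * d * b ^ ((1 : ℝ) / d) * N / (h : ℝ) ^ ((1 : ℝ) / d) := by
    rw [show (1 : ℝ) - 1 / (d : ℝ) = 1 - (1 : ℝ) / d from rfl, Real.rpow_sub hhR,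
      Real.rpow_one]
    field_simp
  calc (((Finset.Icc 1 N).filter (fun n : ℕ => (h : ℤ) ∣ R.eval (n : ℤ))).card : ℝ)
      ≤ _ := step1
    _ ≤ _ := step2
    _ = _ := heq
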